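/- Consider the composite problem minimize φ = f + g under the standing assumptions. If the iterates are generated by adaPGM, then the sequence (x^k) converges to a point in argmin φ. More generally, if the stepsizes γ_k > 0 satisfy γ_{k+1} ≤ γ_k · min{ √(1 + γ_k/γ_{k-1}), 1/(2√([δ_k]₊)) } for all k, inf_k γ_k > 0, and x^{k+1} = prox_{γ_{k+1}g}(x^k − γ_{k+1}∇f(x^k)), then (x^k) converges to a point in argmin φ. -/

import Mathlib

open scoped RealInnerProductSpace
open Filter
open Topology

noncomputable section

/-- Euclidean space `ℝⁿ`. -/
abbrev En (n : ℕ) := EuclideanSpace ℝ (Fin n)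

/-- Local Lipschitz-type estimate `ℓ = ⟨∇f(a) − ∇f(b), a − b⟩ / ‖a − b‖²`
(Lean's division by zero implements the `0/0 = 0` convention). -/
noncomputable def lEst {n : ℕ} (f' : En n → En n) (a b : En n) : ℝ :=
  ⟪f' a - f' b, a - b⟫ / ‖a - b‖ ^ 2

/-- Local (inverse) cocoercivity estimate `c = ‖∇f(a) − ∇f(b)‖² / ⟨∇f(a) − ∇f(b), a − b⟩`
(convention `0/0 = 0`). -/
noncomputable def cEst {n : ℕ} (f' : En n → En n) (a b : En n) : ℝ :=
  ‖f' a - f' b‖ ^ 2 / ⟪f' a - f' b, a - b⟫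

/-- `δ = γ ℓ (γ c − 1)`. -/
noncomputable def deltaEst {n : ℕ} (γ : ℝ) (f' : En n → En n) (a b : En n) : ℝ :=
  γ * lEst f' a b * (γ * cEst f' a b - 1)

/-- `g` is proper, lower semicontinuous and convex (extended-real-valued). -/
def ProperLscConvex {n : ℕ} (g : En n → EReal) : Prop :=
  (∀ x, g x ≠ ⊥) ∧ (∃ x, g x ≠ ⊤) ∧ LowerSemicontinuous g ∧
    ∀ x y : En n, ∀ a b : ℝ, 0 ≤ a → 0 ≤ b → a + b = 1 →
      g (a • x + b • y) ≤ (a : EReal) * g x + (b : EReal) * g y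

/-- `p = prox_{γ g}(u)`, characterized as minimality of `w ↦ g w + ‖w − u‖²/(2γ)`. -/
def IsProx {n : ℕ} (γ : ℝ) (g : En n → EReal) (u p : En n) : Prop :=
  ∀ w, g p + ((‖p - u‖ ^ 2 / (2 * γ) : ℝ) : EReal) ≤ g w + ((‖w - u‖ ^ 2 / (2 * γ) : ℝ) : EReal)

/-- Real value of `φ = f + g` (equals `f z + g z` whenever `g z` is finite). -/
noncomputable def phiR {n : ℕ} (f : En n → ℝ) (g : En n → EReal) (z : En n) : ℝ :=
  f z + (g z).toReal

/-- `P = φ(z) − φ(x*)` (real-valued). -/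
noncomputable def Pval {n : ℕ} (f : En n → ℝ) (g : En n → EReal) (xs z : En n) : ℝ :=
  phiR f g z - phiR f g xs

/-- adaPGM stepsize factor: `min{√(1+ρ), 1/(2√([δ]₊))}` with the convention `1/0 = +∞`
(so the second term is inactive when `[δ]₊ = 0`). -/
noncomputable def adaStep (ρ δ : ℝ) : ℝ :=
  if δ ≤ 0 then Real.sqrt (1 + ρ) else min (Real.sqrt (1 + ρ)) (1 / (2 * Real.sqrt δ))

/-- Malitsky–Mishchenko stepsize: `min{γ√(1+γ/γ'), 1/(2L)}` with the convention `1/0 = +∞`. -/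
noncomputable def mmStep (γprev γ L : ℝ) : ℝ :=
  if L = 0 then γ * Real.sqrt (1 + γ / γprev)
  else min (γ * Real.sqrt (1 + γ / γprev)) (1 / (2 * L))

/-- Lyapunov function `U_k = ½‖x^k − x*‖² + ¼‖x^k − x^{k-1}‖² + γ_k(1+ρ_k)P_{k-1}`,
with the Lean index shifted by one (Lean `x (k+1)` is the paper `x^k`). -/
noncomputable def Ufun {n : ℕ} (f : En n → ℝ) (g : En n → EReal) (xs : En n)
    (x : ℕ → En n) (γ : ℕ → ℝ) (k : ℕ) : ℝ :=
  1/2 * ‖x (k+1) - xs‖ ^ 2 + 1/4 * ‖x (k+1) - x k‖ ^ 2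
    + γ (k+1) * (1 + γ (k+1) / γ k) * Pval f g xs (x k)

/-- derivative at 0 of a convex function on ℝ is below the slope to 1. -/
private lemma key_slope {h : ℝ → ℝ} (hcv : ConvexOn ℝ Set.univ h) {d : ℝ}
    (hd : HasDerivAt h d 0) : h 0 + d ≤ h 1 := by
  have hs : Tendsto (slope h 0) (𝓝[>] (0:ℝ)) (𝓝 d) := by
    refine (hasDerivAt_iff_tendsto_slope.1 hd).mono_left (nhdsWithin_mono 0 ?_)
    intro t ht
    exact ne_of_gt ht
  have hub : ∀ᶠ τ in 𝓝[>] (0:ℝ), slope h 0 τ ≤ h 1 - h 0 := by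
    filter_upwards [Ioc_mem_nhdsGT (zero_lt_one)] with τ hτ
    have hcvx := hcv.2 (Set.mem_univ (1:ℝ)) (Set.mem_univ (0:ℝ)) (le_of_lt hτ.1)
      (by linarith [hτ.2] : (0:ℝ) ≤ 1 - τ) (by ring)
    simp only [smul_eq_mul, mul_one, mul_zero, add_zero] at hcvx
    rw [slope_def_field, sub_zero, div_le_iff₀ hτ.1]
    nlinarith [hτ.1, hτ.2]
  have := le_of_tendsto hs hub
  linarith

lemma gradle {n : ℕ} {f : En n → ℝ} {f' : En n → En n}
    (hconv : ConvexOn ℝ Set.univ f) (hgrad : ∀ z, HasGradientAt f (f' z) z)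
    (x y : En n) : f x + ⟪f' x, y - x⟫ ≤ f y := by
  classical
  set c : ℝ → En n := fun t => x + t • (y - x) with hc
  have hline : HasDerivAt c (y - x) 0 := by
    rw [hc]; simpa using ((hasDerivAt_id (0:ℝ)).smul_const (y - x)).const_add x
  have hc0 : c 0 = x := by simp [hc]
  have hc1 : c 1 = y := by simp [hc]
  have hfd : HasFDerivAt f (InnerProductSpace.toDual ℝ (En n) (f' x)) (c 0) := by
    rw [hc0]; exact hasGradientAt_iff_hasFDerivAt.1 (hgrad x)
  have hcomp : HasDerivAt (f ∘ c) ⟪f' x, y - x⟫ 0 := by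
    have := hfd.comp_hasDerivAt 0 hline
    simpa [InnerProductSpace.toDual_apply_apply] using this
  have hcvx : ConvexOn ℝ Set.univ (f ∘ c) := by
    have h2 := hconv.comp_affineMap (AffineMap.lineMap x y)
    have he : f ∘ c = f ∘ (AffineMap.lineMap x y) := by
      funext t
      simp [hc, AffineMap.lineMap_apply_module]
      congr 1
      module
    rw [he]
    simpa using h2
  have := key_slope hcvx hcomp
  simpa [Function.comp, hc0, hc1] using this

lemma inner_grad_nonneg {n : ℕ} {f : En n → ℝ} {f' : En n → En n}
    (hconv : ConvexOn ℝ Set.univ f) (hgrad : ∀ z, HasGradientAt f (f' z) z)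
    (a b : En n) : 0 ≤ ⟪f' a - f' b, a - b⟫ := by
  have h1 := gradle hconv hgrad a b
  have h2 := gradle hconv hgrad b a
  have e1 : ⟪f' a, b - a⟫ = -⟪f' a, a - b⟫ := by
    rw [← inner_neg_right]; congr 1; abel
  have e2 : ⟪f' a - f' b, a - b⟫ = ⟪f' a, a - b⟫ - ⟪f' b, a - b⟫ := by
    rw [inner_sub_left]
  linarith

lemma grad_eq_of_inner_eq_zero {n : ℕ} {f : En n → ℝ} {f' : En n → En n}
    (hconv : ConvexOn ℝ Set.univ f) (hgrad : ∀ z, HasGradientAt f (f' z) z)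
    {a b : En n} (h0 : ⟪f' a - f' b, a - b⟫ = 0) : f' a = f' b := by
  have h1 := gradle hconv hgrad a b
  have h2 := gradle hconv hgrad b a
  have e1 : ⟪f' a, b - a⟫ = -⟪f' a, a - b⟫ := by
    rw [← inner_neg_right]; congr 1; abel
  have e2 : ⟪f' a - f' b, a - b⟫ = ⟪f' a, a - b⟫ - ⟪f' b, a - b⟫ := by
    rw [inner_sub_left]
  -- Bregman distance from b to a vanishes
  have hD : f a = f b + ⟪f' b, a - b⟫ := by linarith
  -- f' b is a subgradient at a
  have hsub : ∀ y, f a + ⟪f' b, y - a⟫ ≤ f y := by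
    intro y
    have h3 := gradle hconv hgrad b y
    have e3 : ⟪f' b, y - b⟫ = ⟪f' b, y - a⟫ + ⟪f' b, a - b⟫ := by
      rw [← inner_add_right]; congr 1; abel
    linarith
  have hdir : ∀ u : En n, ⟪f' b, u⟫ ≤ ⟪f' a, u⟫ := by
    intro u
    set c : ℝ → En n := fun t => a + t • u with hc
    have hline : HasDerivAt c u 0 := by
      rw [hc]; simpa using ((hasDerivAt_id (0:ℝ)).smul_const u).const_add a
    have hc0 : c 0 = a := by simp [hc]
    have hfd : HasFDerivAt f (InnerProductSpace.toDual ℝ (En n) (f' a)) (c 0) := by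
      rw [hc0]; exact hasGradientAt_iff_hasFDerivAt.1 (hgrad a)
    have hcomp : HasDerivAt (f ∘ c) ⟪f' a, u⟫ 0 := by
      have := hfd.comp_hasDerivAt 0 hline
      simpa [InnerProductSpace.toDual_apply_apply] using this
    have hs : Tendsto (slope (f ∘ c) 0) (𝓝[>] (0:ℝ)) (𝓝 ⟪f' a, u⟫) := by
      refine (hasDerivAt_iff_tendsto_slope.1 hcomp).mono_left (nhdsWithin_mono 0 ?_)
      intro t ht; exact ne_of_gt ht
    refine ge_of_tendsto hs ?_
    filter_upwards [self_mem_nhdsWithin] with τ (hτ : 0 < τ)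
    have h4 := hsub (a + τ • u)
    have e4' : a + τ • u - a = τ • u := by abel
    have e4 : ⟪f' b, (a + τ • u) - a⟫ = τ * ⟪f' b, u⟫ := by
      rw [e4', real_inner_smul_right]
    rw [slope_def_field, sub_zero, le_div_iff₀ hτ]
    have e5 : (f ∘ c) τ = f (a + τ • u) := rfl
    have e6 : (f ∘ c) 0 = f a := by simp [hc]
    rw [e5, e6]
    rw [e4] at h4
    nlinarith
  have hfin := hdir (f' b - f' a)
  have : ⟪f' b - f' a, f' b - f' a⟫ ≤ 0 := by
    rw [inner_sub_left]; linarith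
  have := real_inner_self_nonpos.1 this
  have : f' b - f' a = 0 := this
  have := sub_eq_zero.1 this
  exact this.symm

lemma ne_top_of_add_le {x y : EReal} {c c' : ℝ} (hy : y ≠ ⊤)
    (h : x + (c : EReal) ≤ y + (c' : EReal)) : x ≠ ⊤ := by
  intro hx
  rw [hx, EReal.top_add_coe] at h
  exact absurd (top_le_iff.1 h) (ne_of_lt (EReal.add_lt_top hy (EReal.coe_ne_top c')))

lemma prox_ne_top {n : ℕ} {g : En n → EReal} (hg : ProperLscConvex g) {γ : ℝ} {u p : En n}
    (hp : IsProx γ g u p) : g p ≠ ⊤ := by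
  obtain ⟨w0, hw0⟩ := hg.2.1
  exact ne_top_of_add_le hw0 (hp w0)

lemma min_ne_top {n : ℕ} {f : En n → ℝ} {g : En n → EReal} (hg : ProperLscConvex g) {xs : En n}
    (hxs : ∀ w, (f xs : EReal) + g xs ≤ (f w : EReal) + g w) : g xs ≠ ⊤ := by
  obtain ⟨w0, hw0⟩ := hg.2.1
  intro hx
  have h := hxs w0
  rw [hx, EReal.coe_add_top, top_le_iff] at h
  exact absurd h (ne_of_lt (EReal.add_lt_top (EReal.coe_ne_top _) hw0))

lemma phiR_coe {n : ℕ} {f : En n → ℝ} {g : En n → EReal} (hg : ProperLscConvex g) {z : En n}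
    (hz : g z ≠ ⊤) : ((phiR f g z : ℝ) : EReal) = (f z : EReal) + g z := by
  unfold phiR
  rw [EReal.coe_add]
  congr 1
  exact EReal.coe_toReal hz (hg.1 z)

lemma phiR_min {n : ℕ} {f : En n → ℝ} {g : En n → EReal} (hg : ProperLscConvex g) {xs : En n}
    (hxs : ∀ w, (f xs : EReal) + g xs ≤ (f w : EReal) + g w) {z : En n} (hz : g z ≠ ⊤) :
    phiR f g xs ≤ phiR f g z := by
  have h := hxs z
  rw [← phiR_coe hg (min_ne_top hg hxs), ← phiR_coe hg hz] at h
  exact_mod_cast h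

lemma Pval_nonneg {n : ℕ} {f : En n → ℝ} {g : En n → EReal} (hg : ProperLscConvex g) {xs : En n}
    (hxs : ∀ w, (f xs : EReal) + g xs ≤ (f w : EReal) + g w) {z : En n} (hz : g z ≠ ⊤) :
    0 ≤ Pval f g xs z := by
  have := phiR_min hg hxs hz
  unfold Pval
  linarith

lemma prox_subgrad {n : ℕ} {g : En n → EReal} (hg : ProperLscConvex g) {γ : ℝ} (hγ : 0 < γ)
    {u p : En n} (hp : IsProx γ g u p) {w : En n} (hw : g w ≠ ⊤) :
    (g p).toReal + ⟪u - p, w - p⟫ / γ ≤ (g w).toReal := by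
  have hpt := prox_ne_top hg hp
  set gp := (g p).toReal with hgp'
  set gw := (g w).toReal with hgw'
  have hgp : g p = (gp : EReal) := (EReal.coe_toReal hpt (hg.1 p)).symm
  have hgw : g w = (gw : EReal) := (EReal.coe_toReal hw (hg.1 w)).symm
  set I := ⟪p - u, w - p⟫ with hI
  set S := ‖w - p‖^2 with hS
  have hSnn : 0 ≤ S := by positivity
  have hiup : ⟪u - p, w - p⟫ = -I := by
    rw [hI, show u - p = -(p - u) by abel, inner_neg_left]
  have key : ∀ τ : ℝ, 0 < τ → τ ≤ 1 → gp + (-I)/γ ≤ gw + τ * (S/(2*γ)) := by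
    intro τ hτ0 hτ1
    set q := τ • w + (1-τ) • p with hq
    have hcvx := hg.2.2.2 w p τ (1-τ) (le_of_lt hτ0) (by linarith) (by ring)
    have hrhs : (τ:EReal) * g w + (((1-τ):ℝ):EReal) * g p = ((τ * gw + (1-τ)*gp : ℝ) : EReal) := by
      rw [hgw, hgp]
      norm_cast
    rw [hrhs] at hcvx
    have hprox := hp q
    rw [hgp] at hprox
    have hqu : q - u = (p - u) + τ • (w - p) := by
      rw [hq]
      module
    have expand : ‖q - u‖^2 = ‖p-u‖^2 + 2*(τ*I) + τ^2*S := by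
      rw [hqu, norm_add_sq_real, real_inner_smul_right, norm_smul]
      rw [Real.norm_eq_abs, abs_of_pos hτ0]
      rw [hI, hS]
      ring
    set np := ‖p - u‖^2/(2*γ) with hnp
    have hchain : ((gp + np : ℝ) : EReal) ≤ ((τ * gw + (1-τ)*gp + ‖q - u‖^2/(2*γ) : ℝ) : EReal) := by
      calc ((gp + np : ℝ) : EReal) = (gp : EReal) + (np : EReal) := by rw [EReal.coe_add]
        _ ≤ g q + ((‖q - u‖^2/(2*γ) : ℝ) : EReal) := hprox
        _ ≤ ((τ * gw + (1-τ)*gp : ℝ) : EReal) + ((‖q - u‖^2/(2*γ) : ℝ) : EReal) := by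
            exact add_le_add_left hcvx _
        _ = ((τ * gw + (1-τ)*gp + ‖q - u‖^2/(2*γ) : ℝ) : EReal) := (EReal.coe_add _ _).symm
    have hreal : gp + np ≤ τ * gw + (1-τ)*gp + ‖q - u‖^2/(2*γ) := by exact_mod_cast hchain
    rw [expand] at hreal
    have hsplit : (‖p-u‖^2 + 2*(τ*I) + τ^2*S)/(2*γ) = np + (2*(τ*I) + τ^2*S)/(2*γ) := by
      rw [hnp]; ring
    rw [hsplit] at hreal
    have h5 : 0 ≤ τ * (gw - gp) + (2*(τ*I) + τ^2*S)/(2*γ) := by linarith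
    have e7 : (2*(τ*I) + τ^2*S)/(2*γ) = τ * (I/γ + τ*(S/(2*γ))) := by
      field_simp
    rw [e7] at h5
    have h6 : 0 ≤ τ * ((gw - gp) + (I/γ + τ*(S/(2*γ)))) := by
      rw [mul_add]
      linarith
    have h7 : 0 ≤ (gw - gp) + (I/γ + τ*(S/(2*γ))) := (mul_nonneg_iff_of_pos_left hτ0).1 h6
    have h8 : (-I)/γ = -(I/γ) := by ring
    rw [h8]
    linarith
  -- take τ → 0
  by_contra hcon
  push_neg at hcon
  rw [hiup] at hcon
  set C := S/(2*γ) with hC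
  have hCnn : 0 ≤ C := by positivity
  set ε := gp + (-I)/γ - gw with hε
  have hεpos : 0 < ε := by
    rw [hε]
    linarith [hcon]
  set τ0 := min 1 (ε/(2*(C+1))) with hτ0def
  have hτ0pos : 0 < τ0 := by
    apply lt_min one_pos
    positivity
  have h9 := key τ0 hτ0pos (min_le_left _ _)
  have h10 : τ0 * C < ε := by
    have h11 : τ0 ≤ ε/(2*(C+1)) := min_le_right _ _
    have h12 : τ0 * C ≤ (ε/(2*(C+1))) * C :=
      mul_le_mul_of_nonneg_right h11 hCnn
    have h13 : (ε/(2*(C+1))) * C < ε := by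
      rw [div_mul_eq_mul_div, div_lt_iff₀ (by positivity)]
      nlinarith
    linarith
  rw [hε] at h10
  linarith

private lemma scale_div {a b c r : ℝ} (hr : 0 < r) (h : a + b / r ≤ c) :
    r * a + b ≤ r * c := by
  have h2 := mul_le_mul_of_nonneg_left h hr.le
  have h3 : r * (a + b / r) = r * a + b := by
    field_simp
  linarith

lemma delta_bound {n : ℕ} {f : En n → ℝ} {f' : En n → En n}
    (hconv : ConvexOn ℝ Set.univ f) (hgrad : ∀ z, HasGradientAt f (f' z) z)
    {γc γn : ℝ} (hγc : 0 < γc) (hγn : 0 < γn) (xp xc : En n)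
    (cond2 : γn^2 * deltaEst γc f' xp xc ≤ γc^2/4) :
    γn^2 * (γc * ‖f' xp - f' xc‖^2 - ⟪f' xp - f' xc, xp - xc⟫) ≤ γc * ‖xp - xc‖^2 / 4 := by
  have hInn : 0 ≤ ⟪f' xp - f' xc, xp - xc⟫ := inner_grad_nonneg hconv hgrad xp xc
  rcases eq_or_lt_of_le hInn with h0 | hpos
  · have hΔeq : f' xp = f' xc := grad_eq_of_inner_eq_zero hconv hgrad h0.symm
    have hz : f' xp - f' xc = 0 := sub_eq_zero.2 hΔeq
    rw [hz]
    have h0' : (0:ℝ) ≤ γc * ‖xp - xc‖^2/4 := by positivity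
    simpa using h0'
  · have ht2pos : (0:ℝ) < ‖xp - xc‖^2 := by
      rcases eq_or_ne xp xc with he | hne
      · exfalso
        rw [he] at hpos
        simp at hpos
      · have hne2 : xp - xc ≠ 0 := sub_ne_zero.2 hne
        exact pow_pos (norm_pos_iff.2 hne2) 2
    have hIne : ⟪f' xp - f' xc, xp - xc⟫ ≠ 0 := ne_of_gt hpos
    have ht2ne : ‖xp - xc‖^2 ≠ 0 := ne_of_gt ht2pos
    set X := γc * ‖f' xp - f' xc‖^2 - ⟪f' xp - f' xc, xp - xc⟫ with hX
    have hδ : deltaEst γc f' xp xc = γc * X / ‖xp - xc‖^2 := by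
      unfold deltaEst lEst cEst
      rw [hX]
      set I := ⟪f' xp - f' xc, xp - xc⟫
      set N := ‖f' xp - f' xc‖^2
      set T := ‖xp - xc‖^2
      field_simp
    rw [hδ] at cond2
    have h1 : γn^2 * (γc * X / ‖xp - xc‖^2) * ‖xp - xc‖^2 ≤ γc^2/4 * ‖xp - xc‖^2 :=
      mul_le_mul_of_nonneg_right cond2 ht2pos.le
    have h2 : γn^2 * (γc * X / ‖xp - xc‖^2) * ‖xp - xc‖^2 = γc * (γn^2 * X) := by
      rw [mul_assoc, div_mul_cancel₀ _ ht2ne]; ring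
    have h3 : γc * (γn^2 * X) ≤ γc * (γc * ‖xp - xc‖^2/4) := by
      have h4 : γc^2/4 * ‖xp - xc‖^2 = γc * (γc * ‖xp - xc‖^2/4) := by ring
      linarith [h1, h2.symm.le, h2.le]
    have := (mul_le_mul_iff_right₀ hγc).1 h3
    linarith [this]

set_option maxHeartbeats 1000000 in
lemma onestep {n : ℕ} {f : En n → ℝ} {f' : En n → En n} {g : En n → EReal}
    (hconv : ConvexOn ℝ Set.univ f) (hgrad : ∀ z, HasGradientAt f (f' z) z)
    (hg : ProperLscConvex g) {xs : En n}
    (hxs : ∀ w, (f xs : EReal) + g xs ≤ (f w : EReal) + g w)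
    {γp γc γn : ℝ} (hγp : 0 < γp) (hγc : 0 < γc) (hγn : 0 < γn)
    {xp xc xn : En n} (hgxp : g xp ≠ ⊤)
    (hpc : IsProx γc g (xp - γc • f' xp) xc)
    (hpn : IsProx γn g (xc - γn • f' xc) xn)
    (cond1 : γn^2 ≤ γc^2 * (1 + γc/γp))
    (cond2 : γn^2 * deltaEst γc f' xp xc ≤ γc^2/4) :
    (1/2*‖xn - xs‖^2 + 1/4*‖xn - xc‖^2 + γn*(1+γn/γc)*Pval f g xs xc)
      + 1/4*‖xn - xc - (2:ℝ) • ((γn/γc) • (xc - xp) + γn • (f' xp - f' xc))‖^2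
      ≤ 1/2*‖xc - xs‖^2 + 1/4*‖xc - xp‖^2 + γc*(1+γc/γp)*Pval f g xs xp
    ∧ γn * Pval f g xs xc ≤ 1/2*‖xc - xs‖^2 - 1/2*‖xn - xs‖^2
        + 1/2*‖xn - xc - (2:ℝ) • ((γn/γc) • (xc - xp) + γn • (f' xp - f' xc))‖^2
    ∧ ‖xn - xc‖ ≤ ‖xn - xc - (2:ℝ) • ((γn/γc) • (xc - xp) + γn • (f' xp - f' xc))‖ := by
  have hgxc : g xc ≠ ⊤ := prox_ne_top hg hpc
  have hgxn : g xn ≠ ⊤ := prox_ne_top hg hpn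
  have hgxs : g xs ≠ ⊤ := min_ne_top hg hxs
  set d : En n := xc - xp with hd
  set d' : En n := xn - xc with hd'
  set Δ : En n := f' xp - f' xc with hΔ
  set ρ := γn/γc with hρ
  have hρpos : 0 < ρ := div_pos hγn hγc
  have hγργ : γn = ρ*γc := by rw [hρ]; field_simp
  set w : En n := ρ • d + γn • Δ with hw
  set e : En n := d' - (2:ℝ) • w with he
  have Ppnn : 0 ≤ Pval f g xs xp := Pval_nonneg hg hxs hgxp
  have Pcnn : 0 ≤ Pval f g xs xc := Pval_nonneg hg hxs hgxc
  -- subgradient inequalities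
  have G1 := prox_subgrad hg hγn hpn hgxs
  have G2 := prox_subgrad hg hγc hpc hgxn
  have G3 := prox_subgrad hg hγc hpc hgxp
  have G4 := prox_subgrad hg hγn hpn hgxc
  have C1 := gradle hconv hgrad xc xs
  have C2 := gradle hconv hgrad xc xp
  -- scaled versions
  have G1' := scale_div hγn G1
  have G2' := scale_div hγc G2
  have G3' := scale_div hγc G3
  have G4' := scale_div hγn G4
  -- inner product expansions
  have hns := norm_sub_sq_real (xn - xs) d'
  have hsub1 : xn - xs - d' = xc - xs := by rw [hd']; abel
  rw [hsub1] at hns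
  have hdp : ⟪d', xn - xs⟫ = (‖d'‖^2 + ‖xn - xs‖^2 - ‖xc - xs‖^2)/2 := by
    rw [real_inner_comm]
    linarith [hns]
  have E1 : ⟪(xc - γn • f' xc) - xn, xs - xn⟫
      = ⟪d', xn - xs⟫ + γn * ⟪f' xc, xn - xs⟫ := by
    have hv : (xc - γn • f' xc) - xn = -(d' + γn • f' xc) := by rw [hd']; module
    have hv2 : xs - xn = -(xn - xs) := by abel
    rw [hv, hv2, inner_neg_neg, inner_add_left, real_inner_smul_left]
  have E2 : ⟪(xp - γc • f' xp) - xc, d'⟫ = -⟪d, d'⟫ - γc*⟪f' xp, d'⟫ := by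
    have hv : (xp - γc • f' xp) - xc = -(d + γc • f' xp) := by rw [hd]; module
    rw [hv, inner_neg_left, inner_add_left, real_inner_smul_left]
    ring
  have hxpc : xp - xc = -d := by rw [hd]; abel
  have hxcn : xc - xn = -d' := by rw [hd']; abel
  have E3 : ⟪(xp - γc • f' xp) - xc, xp - xc⟫ = ‖d‖^2 + γc*⟪f' xp, d⟫ := by
    have hv : (xp - γc • f' xp) - xc = -(d + γc • f' xp) := by rw [hd]; module
    rw [hv, hxpc, inner_neg_neg, inner_add_left, real_inner_smul_left,
      real_inner_self_eq_norm_sq]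
  have E4 : ⟪(xc - γn • f' xc) - xn, xc - xn⟫ = ‖d'‖^2 + γn*⟪f' xc, d'⟫ := by
    have hv : (xc - γn • f' xc) - xn = -(d' + γn • f' xc) := by rw [hd']; module
    rw [hv, hxcn, inner_neg_neg, inner_add_left, real_inner_smul_left,
      real_inner_self_eq_norm_sq]
  have E5 : ⟪w, d'⟫ = ρ*⟪d,d'⟫ + γn*⟪f' xp, d'⟫ - γn*⟪f' xc, d'⟫ := by
    simp only [hw, hΔ, inner_add_left, inner_sub_left, real_inner_smul_left]
    ring
  have E6 : ⟪f' xc, xs - xc⟫ = -⟪f' xc, xn - xs⟫ + ⟪f' xc, d'⟫ := by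
    rw [show xs - xc = d' - (xn - xs) by rw [hd']; abel, inner_sub_right]
    ring
  have E7 : ⟪f' xc, xp - xc⟫ = -⟪f' xc, d⟫ := by
    rw [hxpc, inner_neg_right]
  have E8 : ⟪Δ, d⟫ = ⟪f' xp, d⟫ - ⟪f' xc, d⟫ := by
    rw [hΔ, inner_sub_left]
  -- rewrite scaled subgradient inequalities
  rw [E1] at G1'
  rw [E2] at G2'
  rw [E3] at G3'
  rw [E4] at G4'
  -- multiplied convexity inequalities
  have C1γ := mul_le_mul_of_nonneg_left C1 hγn.le
  have C1s : γn * ⟪f' xc, xs - xc⟫ = -(γn*⟪f' xc, xn - xs⟫) + γn*⟪f' xc, d'⟫ := by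
    rw [E6]; ring
  have C2γ := mul_le_mul_of_nonneg_left C2 hγc.le
  have C2s : γc * ⟪f' xc, xp - xc⟫ = -(γc*⟪f' xc, d⟫) := by rw [E7]; ring
  -- Pval expansions
  have defPc : Pval f g xs xc = f xc + (g xc).toReal - (f xs + (g xs).toReal) := by
    unfold Pval phiR; ring
  have defPp : Pval f g xs xp = f xp + (g xp).toReal - (f xs + (g xs).toReal) := by
    unfold Pval phiR; ring
  have defPcγn : γn * Pval f g xs xc
      = γn*(f xc) + γn*((g xc).toReal) - γn*(f xs) - γn*((g xs).toReal) := by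
    rw [defPc]; ring
  -- G2 scaled by ρ
  have G2'' : γn*((g xc).toReal) - ρ*⟪d,d'⟫ - γn*⟪f' xp, d'⟫ ≤ γn*((g xn).toReal) := by
    have h := mul_le_mul_of_nonneg_left G2' hρpos.le
    have e1 : ρ*(γc * (g xc).toReal + (-⟪d, d'⟫ - γc*⟪f' xp, d'⟫))
        = γn*((g xc).toReal) - ρ*⟪d,d'⟫ - γn*⟪f' xp, d'⟫ := by
      rw [hγργ]; ring
    have e2 : ρ*(γc * (g xn).toReal) = γn*((g xn).toReal) := by rw [hγργ]; ring
    linarith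
  -- F1 : anchor inequality
  have F1 : ‖xn - xs‖^2 ≤ ‖xc - xs‖^2 - 2*(γn*Pval f g xs xc) - ‖d'‖^2 + 2*⟪w,d'⟫ := by
    linarith only [G1', G2'', C1γ, C1s, E5, defPcγn, hdp]
  -- F2 : descent inequality (γc-multiplied)
  have F2 : γc*Pval f g xs xc + ‖d‖^2 + γc*⟪Δ,d⟫ ≤ γc*Pval f g xs xp := by
    have defPcγc : γc * Pval f g xs xc
        = γc*(f xc) + γc*((g xc).toReal) - γc*(f xs) - γc*((g xs).toReal) := by
      rw [defPc]; ring
    have defPpγc : γc * Pval f g xs xp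
        = γc*(f xp) + γc*((g xp).toReal) - γc*(f xs) - γc*((g xs).toReal) := by
      rw [defPp]; ring
    have E8γc : γc*⟪Δ,d⟫ = γc*⟪f' xp, d⟫ - γc*⟪f' xc, d⟫ := by rw [E8]; ring
    linarith only [G3', C2γ, C2s, defPcγc, defPpγc, E8γc]
  -- P2' : cond1 trade
  have P2' : (ρ*γn)*Pval f g xs xp ≤ (γc*(1+γc/γp))*Pval f g xs xp := by
    refine mul_le_mul_of_nonneg_right ?_ Ppnn
    have h1 : (ρ*γn)*γc ≤ (γc*(1+γc/γp))*γc := by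
      have e : (ρ*γn)*γc = γn^2 := by rw [hγργ]; ring
      have e2 : (γc*(1+γc/γp))*γc = γc^2*(1+γc/γp) := by ring
      rw [e, e2]
      exact cond1
    exact le_of_mul_le_mul_right h1 hγc
  -- P3 : trade of F2
  have P3 : ρ*γn*Pval f g xs xc + ρ^2*‖d‖^2 + ρ*γn*⟪Δ,d⟫ ≤ ρ*γn*Pval f g xs xp := by
    have h := mul_le_mul_of_nonneg_left F2 (sq_nonneg ρ)
    have e1 : ρ^2*(γc*Pval f g xs xc + ‖d‖^2 + γc*⟪Δ,d⟫)
        = ρ*γn*Pval f g xs xc + ρ^2*‖d‖^2 + ρ*γn*⟪Δ,d⟫ := by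
      rw [hγργ]; ring
    have e2 : ρ^2*(γc*Pval f g xs xp) = ρ*γn*Pval f g xs xp := by rw [hγργ]; ring
    linarith
  -- P5 : W-fact
  have hWd := delta_bound hconv hgrad hγc hγn xp xc cond2
  have hWd' : γn^2*(γc*‖Δ‖^2 + ⟪Δ,d⟫) ≤ γc*‖d‖^2/4 := by
    have hnorm : ‖xp - xc‖ = ‖d‖ := by rw [hxpc, norm_neg]
    have hip : ⟪f' xp - f' xc, xp - xc⟫ = -⟪Δ,d⟫ := by
      rw [hxpc, ← hΔ, inner_neg_right]
    rw [hnorm, hip, ← hΔ] at hWd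
    linarith [hWd]
  have expW : ‖w‖^2 = ρ^2*‖d‖^2 + 2*(ρ*γn*⟪Δ,d⟫) + γn^2*‖Δ‖^2 := by
    rw [hw, norm_add_sq_real, real_inner_smul_left, real_inner_smul_right,
      norm_smul, norm_smul, real_inner_comm d Δ]
    simp [Real.norm_eq_abs, abs_of_pos hρpos, abs_of_pos hγn]
    ring
  have P5 : ‖w‖^2 ≤ ‖d‖^2/4 + ρ^2*‖d‖^2 + ρ*γn*⟪Δ,d⟫ := by
    have key : γc*(γn^2*‖Δ‖^2 + ρ*γn*⟪Δ,d⟫) ≤ γc*(‖d‖^2/4) := by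
      have e : γc*(γn^2*‖Δ‖^2 + ρ*γn*⟪Δ,d⟫) = γn^2*(γc*‖Δ‖^2 + ⟪Δ,d⟫) := by
        rw [hγργ]; ring
      rw [e]
      linarith [hWd']
    have key2 : γn^2*‖Δ‖^2 + ρ*γn*⟪Δ,d⟫ ≤ ‖d‖^2/4 := (mul_le_mul_iff_right₀ hγc).1 key
    linarith [expW, key2]
  -- Iden1
  have Iden1 : ‖e‖^2 = ‖d'‖^2 - 4*⟪w,d'⟫ + 4*‖w‖^2 := by
    rw [he, norm_sub_sq_real, real_inner_smul_right, norm_smul, real_inner_comm d' w]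
    norm_num [Real.norm_eq_abs]
    ring
  -- C-part : ‖d'‖ ≤ ‖e‖
  have F3 : ‖d'‖^2 ≤ ⟪w, d'⟫ := by
    linarith only [G2'', G4', E5]
  have Iden2 : ‖d'‖^2 = 2*⟪w,d'⟫ + ⟪e, d'⟫ := by
    have hsplit : d' = (2:ℝ) • w + e := by rw [he]; module
    calc ‖d'‖^2 = ⟪d', d'⟫ := (real_inner_self_eq_norm_sq d').symm
      _ = ⟪(2:ℝ) • w + e, d'⟫ := by rw [← hsplit]
      _ = 2*⟪w,d'⟫ + ⟪e, d'⟫ := by rw [inner_add_left, real_inner_smul_left]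
  have CS : -⟪e, d'⟫ ≤ ‖e‖*‖d'‖ := by
    have := abs_real_inner_le_norm e d'
    have h2 := neg_abs_le ⟪e, d'⟫
    linarith [this, h2, abs_nonneg ⟪e, d'⟫]
  have Cpart : ‖d'‖ ≤ ‖e‖ := by
    rcases eq_or_lt_of_le (norm_nonneg d') with h0 | hpos
    · rw [← h0]; exact norm_nonneg e
    · have hsq : ‖d'‖^2 = ‖d'‖*‖d'‖ := by ring
      have h1 : ‖d'‖*‖d'‖ ≤ ‖e‖*‖d'‖ := by
        linarith only [F3, Iden2, CS, hsq]
      exact le_of_mul_le_mul_right h1 hpos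
  -- B-part
  have hwe : ‖w‖ ≤ ‖e‖ := by
    have h2w : (2:ℝ) • w = d' - e := by rw [he]; module
    have h3 : ‖(2:ℝ) • w‖ = 2*‖w‖ := by
      rw [norm_smul]; simp [Real.norm_eq_abs]
    have h4 : ‖d' - e‖ ≤ ‖d'‖ + ‖e‖ := norm_sub_le _ _
    rw [h2w] at h3
    linarith [Cpart, h3.symm.le, h3.le, h4]
  have hW2E2 : ‖w‖^2 ≤ ‖e‖^2 := by
    have h := mul_self_le_mul_self (norm_nonneg w) hwe
    calc ‖w‖^2 = ‖w‖*‖w‖ := by ring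
      _ ≤ ‖e‖*‖e‖ := h
      _ = ‖e‖^2 := by ring
  have Iden3 : ‖d' - w‖^2 = ‖d'‖^2 - 2*⟪w,d'⟫ + ‖w‖^2 := by
    rw [norm_sub_sq_real, real_inner_comm d' w]
  have Bpart : γn * Pval f g xs xc ≤ 1/2*‖xc - xs‖^2 - 1/2*‖xn - xs‖^2 + 1/2*‖e‖^2 := by
    have hnn : (0:ℝ) ≤ ‖d' - w‖^2 := sq_nonneg _
    linarith only [F1, Iden3, hW2E2, hnn]
  -- A-part
  have Apart : (1/2*‖xn - xs‖^2 + 1/4*‖d'‖^2 + γn*(1+ρ)*Pval f g xs xc) + 1/4*‖e‖^2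
      ≤ 1/2*‖xc - xs‖^2 + 1/4*‖d‖^2 + γc*(1+γc/γp)*Pval f g xs xp := by
    linarith only [F1, P2', P3, P5, Iden1]
  exact ⟨Apart, Bpart, Cpart⟩

lemma adaStep_le_sqrt (ρ δ : ℝ) : adaStep ρ δ ≤ Real.sqrt (1 + ρ) := by
  unfold adaStep
  split_ifs
  · exact le_refl _
  · exact min_le_left _ _

lemma rule_cond1 {γp γc γn : ℝ} (hγp : 0 < γp) (hγc : 0 < γc) (hγn : 0 < γn) (δ : ℝ)
    (h : γn ≤ γc * adaStep (γc/γp) δ) : γn^2 ≤ γc^2 * (1 + γc/γp) := by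
  have hρ : (0:ℝ) ≤ 1 + γc/γp := by positivity
  have h2 : γn ≤ γc * Real.sqrt (1 + γc/γp) :=
    le_trans h (mul_le_mul_of_nonneg_left (adaStep_le_sqrt _ _) hγc.le)
  have h3 := pow_le_pow_left₀ hγn.le h2 2
  rw [mul_pow, Real.sq_sqrt hρ] at h3
  exact h3

lemma rule_cond2 {γp γc γn : ℝ} (hγc : 0 < γc) (hγn : 0 < γn) (δ : ℝ)
    (h : γn ≤ γc * adaStep (γc/γp) δ) : γn^2 * δ ≤ γc^2/4 := by
  rcases le_or_gt δ 0 with hδ | hδ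
  · have h1 : γn^2*δ ≤ 0 := mul_nonpos_of_nonneg_of_nonpos (sq_nonneg _) hδ
    have h2 : (0:ℝ) ≤ γc^2/4 := by positivity
    linarith
  · have hstep : adaStep (γc/γp) δ ≤ 1/(2*Real.sqrt δ) := by
      unfold adaStep
      rw [if_neg (not_le.2 hδ)]
      exact min_le_right _ _
    have h2 : γn ≤ γc * (1/(2*Real.sqrt δ)) :=
      le_trans h (mul_le_mul_of_nonneg_left hstep hγc.le)
    have hsq : 0 < Real.sqrt δ := Real.sqrt_pos.2 hδ
    have h3 := pow_le_pow_left₀ hγn.le h2 2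
    rw [mul_pow, div_pow, mul_pow, Real.sq_sqrt hδ.le] at h3
    have h4 : γn^2*δ ≤ γc^2 * (1^2/(2^2*δ)) * δ := mul_le_mul_of_nonneg_right h3 hδ.le
    have h5 : γc^2 * (1^2/(2^2*δ)) * δ = γc^2/4 := by
      field_simp
      ring
    linarith
  
lemma tele_sum {u v : ℕ → ℝ} (h : ∀ k, u (k+1) + v k ≤ u k) :
    ∀ N, (∑ k ∈ Finset.range N, v k) + u N ≤ u 0 := by
  intro N
  induction N with
  | zero => simp
  | succ N ih =>
      rw [Finset.sum_range_succ]
      have := h N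
      linarith

set_option maxHeartbeats 1000000 in
lemma core {n : ℕ} {f : En n → ℝ} {f' : En n → En n} {g : En n → EReal}
    (hconv : ConvexOn ℝ Set.univ f) (hgrad : ∀ z, HasGradientAt f (f' z) z)
    (hg : ProperLscConvex g)
    (hargmin : ∃ z, ∀ w, (f z : EReal) + g z ≤ (f w : EReal) + g w)
    (x : ℕ → En n) (γ : ℕ → ℝ) (hγ : ∀ k, 0 < γ k)
    (hprox : ∀ k, IsProx (γ (k+1)) g (x k - γ (k+1) • f' (x k)) (x (k+1)))
    (hrule : ∀ k, γ (k+2)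
      ≤ γ (k+1) * adaStep (γ (k+1)/γ k) (deltaEst (γ (k+1)) f' (x k) (x (k+1))))
    (hlb : ∃ c : ℝ, 0 < c ∧ ∀ k, c ≤ γ k) :
    ∃ xh : En n, (∀ w, (f xh : EReal) + g xh ≤ (f w : EReal) + g w) ∧
      Tendsto x atTop (nhds xh) := by
  obtain ⟨xs, hxs⟩ := hargmin
  obtain ⟨c, hc, hcγ⟩ := hlb
  have hcontf : Continuous f := continuous_iff_continuousAt.2
    (fun z => (hasGradientAt_iff_hasFDerivAt.1 (hgrad z)).continuousAt)
  have hgxs : g xs ≠ ⊤ := min_ne_top hg hxs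
  have hfin : ∀ k, g (x (k+1)) ≠ ⊤ := fun k => prox_ne_top hg (hprox k)
  -- the error sequence
  set E : ℕ → ℝ := fun k =>
    ‖x (k+3) - x (k+2) - (2:ℝ) • ((γ (k+3)/γ (k+2)) • (x (k+2) - x (k+1))
      + γ (k+3) • (f' (x (k+1)) - f' (x (k+2))))‖ with hE
  -- generic one-step for an arbitrary minimizer anchor
  have stepgen : ∀ (ys : En n), (∀ w, (f ys : EReal) + g ys ≤ (f w : EReal) + g w) → ∀ k : ℕ,
      (Ufun f g ys x γ (k+2) + 1/4*(E k)^2 ≤ Ufun f g ys x γ (k+1))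
      ∧ (γ (k+3) * Pval f g ys (x (k+2)) ≤ 1/2*‖x (k+2) - ys‖^2 - 1/2*‖x (k+3) - ys‖^2
          + 1/2*(E k)^2)
      ∧ ‖x (k+3) - x (k+2)‖ ≤ E k := by
    intro ys hys k
    have cond1 := rule_cond1 (hγ (k+1)) (hγ (k+2)) (hγ (k+3)) _ (hrule (k+1))
    have cond2 := rule_cond2 (hγ (k+2)) (hγ (k+3)) _ (hrule (k+1))
    have h := onestep hconv hgrad hg hys (hγ (k+1)) (hγ (k+2)) (hγ (k+3)) (hfin k)
      (hprox (k+1)) (hprox (k+2)) cond1 cond2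
    unfold Ufun
    rw [hE]
    exact ⟨h.1, h.2.1, h.2.2⟩
  have step := stepgen xs hxs
  -- nonnegativity of the Lyapunov terms
  have Pnn : ∀ k, 0 ≤ Pval f g xs (x (k+1)) := fun k => Pval_nonneg hg hxs (hfin k)
  have coefnn : ∀ k, 0 ≤ γ (k+2) * (1 + γ (k+2) / γ (k+1)) := by
    intro k
    have h1 := hγ (k+2); have h2 := hγ (k+1)
    positivity
  have Unn : ∀ k, 0 ≤ Ufun f g xs x γ (k+1) := by
    intro k
    unfold Ufun
    have h1 := Pnn k
    have h2 := coefnn k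
    have h3 : (0:ℝ) ≤ 1/2 * ‖x (k+2) - xs‖^2 := by positivity
    have h4 : (0:ℝ) ≤ 1/4 * ‖x (k+2) - x (k+1)‖^2 := by positivity
    nlinarith [mul_nonneg h2 h1]
  -- monotonicity
  have Umono : Antitone (fun k => Ufun f g xs x γ (k+1)) := by
    apply antitone_nat_of_succ_le
    intro k
    have := (step k).1
    have hE2 : (0:ℝ) ≤ 1/4*(E k)^2 := by positivity
    linarith
  have Ubd : ∀ k, Ufun f g xs x γ (k+1) ≤ Ufun f g xs x γ 1 := by
    intro k
    have := Umono (Nat.zero_le k)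
    simpa using this
  -- summability of E^2
  have hEsum : ∀ N, (∑ k ∈ Finset.range N, 1/4*(E k)^2) ≤ Ufun f g xs x γ 1 := by
    intro N
    have := tele_sum (u := fun k => Ufun f g xs x γ (k+1)) (v := fun k => 1/4*(E k)^2)
      (fun k => (step k).1) N
    have h2 := Unn N
    linarith [this]
  have hEsummable : Summable (fun k => (E k)^2) := by
    have h1 : Summable (fun k => 1/4*(E k)^2) := by
      apply summable_of_sum_range_le (c := Ufun f g xs x γ 1)
      · intro k; positivity
      · exact hEsum
    have := h1.mul_left 4
    simpa using this
  have hE0 : Tendsto E atTop (𝓝 0) := by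
    have h2 := hEsummable.tendsto_atTop_zero
    have h3 : Tendsto (fun k => Real.sqrt ((E k)^2)) atTop (𝓝 (Real.sqrt 0)) :=
      (Real.continuous_sqrt.tendsto 0).comp h2
    rw [Real.sqrt_zero] at h3
    have h4 : (fun k => Real.sqrt ((E k)^2)) = E := by
      funext k
      rw [Real.sqrt_sq (by rw [hE]; positivity)]
    rwa [h4] at h3
  -- summability of γ P
  have hBsum : ∀ N, (∑ k ∈ Finset.range N, γ (k+3) * Pval f g xs (x (k+2)))
      ≤ 1/2*‖x 2 - xs‖^2 + 2*Ufun f g xs x γ 1 := by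
    intro N
    have h1 := tele_sum (u := fun k => 1/2*‖x (k+2) - xs‖^2)
      (v := fun k => γ (k+3) * Pval f g xs (x (k+2)) - 1/2*(E k)^2)
      (fun k => by have := (step k).2.1; linarith) N
    have h2 : (∑ k ∈ Finset.range N, (γ (k+3) * Pval f g xs (x (k+2)) - 1/2*(E k)^2))
        = (∑ k ∈ Finset.range N, γ (k+3) * Pval f g xs (x (k+2)))
          - (∑ k ∈ Finset.range N, 1/2*(E k)^2) := by
      rw [← Finset.sum_sub_distrib]
    have h3 : (∑ k ∈ Finset.range N, 1/2*(E k)^2)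
        ≤ 2*Ufun f g xs x γ 1 := by
      have := hEsum N
      have h4 : (∑ k ∈ Finset.range N, 1/2*(E k)^2)
          = 2*(∑ k ∈ Finset.range N, 1/4*(E k)^2) := by
        rw [Finset.mul_sum]
        congr 1
        funext k
        ring
      linarith [hEsum N]
    have h5 : (0:ℝ) ≤ 1/2*‖x (N+2) - xs‖^2 := by positivity
    linarith
  have hBsummable : Summable (fun k => γ (k+3) * Pval f g xs (x (k+2))) := by
    apply summable_of_sum_range_le (c := 1/2*‖x 2 - xs‖^2 + 2*Ufun f g xs x γ 1)
    · intro k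
      exact mul_nonneg (hγ (k+3)).le (Pnn (k+1))
    · exact hBsum
  have hgP0 : Tendsto (fun k => γ (k+3) * Pval f g xs (x (k+2))) atTop (𝓝 0) :=
    hBsummable.tendsto_atTop_zero
  -- P → 0
  have hP0 : Tendsto (fun k => Pval f g xs (x (k+2))) atTop (𝓝 0) := by
    have key : ∀ k, Pval f g xs (x (k+2)) ≤ (1/c) * (γ (k+3) * Pval f g xs (x (k+2))) := by
      intro k
      have h1 : c * Pval f g xs (x (k+2)) ≤ γ (k+3) * Pval f g xs (x (k+2)) :=
        mul_le_mul_of_nonneg_right (hcγ (k+3)) (Pnn (k+1))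
      have h2 : (1/c) * (γ (k+3) * Pval f g xs (x (k+2)))
          = (γ (k+3) * Pval f g xs (x (k+2)))/c := by ring
      rw [h2, le_div_iff₀ hc]
      linarith
    apply squeeze_zero (fun k => Pnn (k+1)) key
    have := hgP0.const_mul (1/c)
    simpa using this
  -- t → 0
  have ht0 : Tendsto (fun k => ‖x (k+3) - x (k+2)‖) atTop (𝓝 0) := by
    apply squeeze_zero (fun k => norm_nonneg _) (fun k => (step k).2.2) hE0
  -- full-sequence versions
  have hP0' : Tendsto (fun k => Pval f g xs (x k)) atTop (𝓝 0) := by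
    rw [← tendsto_add_atTop_iff_nat 2]
    exact hP0
  have ht0' : Tendsto (fun k => ‖x (k+1) - x k‖) atTop (𝓝 0) := by
    rw [show (fun k => ‖x (k+1) - x k‖) = fun k => ‖x (k+1) - x k‖ from rfl]
    rw [← tendsto_add_atTop_iff_nat 2]
    exact ht0
  have hgP0' : Tendsto (fun k => γ (k+1) * Pval f g xs (x k)) atTop (𝓝 0) := by
    rw [← tendsto_add_atTop_iff_nat 2]
    exact hgP0
  -- boundedness of the iterates
  have hUb : ∀ m, 1/2*‖x (m+2) - xs‖^2 ≤ Ufun f g xs x γ 1 := by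
    intro m
    have h1 : 1/2*‖x (m+2) - xs‖^2 ≤ Ufun f g xs x γ (m+1) := by
      unfold Ufun
      have h2 := Pnn m
      have h3 := coefnn m
      have h4 : (0:ℝ) ≤ 1/4 * ‖x (m+2) - x (m+1)‖^2 := by positivity
      nlinarith [mul_nonneg h3 h2]
    exact le_trans h1 (Ubd m)
  set R := max (Real.sqrt (2*Ufun f g xs x γ 1)) (max ‖x 0 - xs‖ ‖x 1 - xs‖) with hR
  have hxball : ∀ k, x k ∈ Metric.closedBall xs R := by
    intro k
    rw [Metric.mem_closedBall, dist_eq_norm]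
    match k with
    | 0 => exact le_trans (le_max_left _ _) (le_max_right _ _)
    | 1 => exact le_trans (le_max_right _ _) (le_max_right _ _)
    | (m+2) =>
      refine le_trans ?_ (le_max_left _ _)
      rw [show ‖x (m+2) - xs‖ = Real.sqrt (‖x (m+2) - xs‖^2) by
        rw [Real.sqrt_sq (norm_nonneg _)]]
      apply Real.sqrt_le_sqrt
      have := hUb m
      linarith
  obtain ⟨xh, _, φ, hφ, hxφ⟩ := tendsto_subseq_of_bounded
    (Metric.isBounded_closedBall (x := xs) (r := R)) hxball
  -- xh is a minimizer
  have hfφ : Tendsto (fun j => f (x (φ j))) atTop (𝓝 (f xh)) :=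
    (hcontf.tendsto xh).comp hxφ
  have hPφ : Tendsto (fun j => Pval f g xs (x (φ j))) atTop (𝓝 0) :=
    hP0'.comp (hφ.tendsto_atTop)
  have hgxh : g xh ≤ ((phiR f g xs - f xh : ℝ) : EReal) := by
    by_contra hcon
    push_neg at hcon
    obtain ⟨y, hy1, hy2⟩ := EReal.exists_between_coe_real hcon
    have hev : ∀ᶠ j in atTop, (y:EReal) < g (x (φ j)) := by
      have hlsc := hg.2.2.1 xh y hy2
      exact hxφ.eventually hlsc
    have hev2 : ∀ᶠ j in atTop, y ≤ phiR f g xs + Pval f g xs (x (φ j)) - f (x (φ j)) := by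
      filter_upwards [hev, eventually_ge_atTop 1] with j hj hj1
      have hφj : 1 ≤ φ j := le_trans hj1 (hφ.le_apply)
      obtain ⟨m, hm⟩ : ∃ m, φ j = m + 1 := ⟨φ j - 1, by omega⟩
      have hfinj : g (x (φ j)) ≠ ⊤ := by rw [hm]; exact hfin m
      have hcoe : g (x (φ j)) = (((g (x (φ j))).toReal : ℝ) : EReal) :=
        (EReal.coe_toReal hfinj (hg.1 _)).symm
      rw [hcoe] at hj
      have hyr : y < (g (x (φ j))).toReal := by exact_mod_cast hj
      have hval : (g (x (φ j))).toReal = phiR f g xs + Pval f g xs (x (φ j)) - f (x (φ j)) := by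
        unfold Pval phiR
        ring
      linarith [hyr, hval.symm.le, hval.le]
    have hlim : Tendsto (fun j => phiR f g xs + Pval f g xs (x (φ j)) - f (x (φ j))) atTop
        (𝓝 (phiR f g xs + 0 - f xh)) := by
      exact ((tendsto_const_nhds.add hPφ).sub hfφ)
    have hyle : y ≤ phiR f g xs + 0 - f xh := ge_of_tendsto hlim hev2
    have : (phiR f g xs - f xh : ℝ) < y := by exact_mod_cast hy1
    linarith
  have hgxh_ne_top : g xh ≠ ⊤ := by
    intro h
    rw [h] at hgxh
    exact (EReal.coe_ne_top _) (top_le_iff.1 hgxh)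
  have hxh_min : ∀ w, (f xh : EReal) + g xh ≤ (f w : EReal) + g w := by
    intro w
    calc (f xh : EReal) + g xh ≤ (f xh : EReal) + ((phiR f g xs - f xh : ℝ) : EReal) :=
          add_le_add_right hgxh _
      _ = ((phiR f g xs : ℝ) : EReal) := by
          rw [← EReal.coe_add]
          norm_num
      _ = (f xs : EReal) + g xs := phiR_coe hg hgxs
      _ ≤ (f w : EReal) + g w := hxs w
  -- phiR xh = phiR xs
  have hphiR_eq : phiR f g xh = phiR f g xs := by
    have h1 : phiR f g xs ≤ phiR f g xh := phiR_min hg hxs hgxh_ne_top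
    have h2 : (g xh).toReal ≤ phiR f g xs - f xh := by
      have := EReal.toReal_le_toReal hgxh (hg.1 xh) (EReal.coe_ne_top _)
      rwa [EReal.toReal_coe] at this
    unfold phiR at *
    linarith
  have hPval_eq : ∀ z, Pval f g xh z = Pval f g xs z := by
    intro z
    unfold Pval
    rw [hphiR_eq]
  -- Lyapunov with anchor xh
  have step' := stepgen xh hxh_min
  have Umono' : Antitone (fun k => Ufun f g xh x γ (k+1)) := by
    apply antitone_nat_of_succ_le
    intro k
    have := (step' k).1
    have hE2 : (0:ℝ) ≤ 1/4*(E k)^2 := by positivity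
    linarith
  -- U' along the subsequence tends to 0
  have hrhobd : ∀ k, γ (k+2)/γ (k+1) ≤ max (γ 1/γ 0) 2 := by
    have key : ∀ k, γ (k+1)/γ k ≤ max (γ 1/γ 0) 2 := by
      intro k
      induction k with
      | zero => exact le_max_left _ _
      | succ k ih =>
          have h1 : γ (k+2) ≤ γ (k+1) * Real.sqrt (1 + γ (k+1)/γ k) :=
            le_trans (hrule k)
              (mul_le_mul_of_nonneg_left (adaStep_le_sqrt _ _) (hγ (k+1)).le)
          have hM : (2:ℝ) ≤ max (γ 1/γ 0) 2 := le_max_right _ _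
          have h2 : Real.sqrt (1 + γ (k+1)/γ k) ≤ max (γ 1/γ 0) 2 := by
            have h3 : 1 + γ (k+1)/γ k ≤ (max (γ 1/γ 0) 2)^2 := by nlinarith
            calc Real.sqrt (1 + γ (k+1)/γ k) ≤ Real.sqrt ((max (γ 1/γ 0) 2)^2) :=
                  Real.sqrt_le_sqrt h3
              _ = max (γ 1/γ 0) 2 := Real.sqrt_sq (by linarith)
          rw [div_le_iff₀ (hγ (k+1))]
          calc γ (k+1+1) ≤ γ (k+1) * Real.sqrt (1 + γ (k+1)/γ k) := h1
            _ ≤ γ (k+1) * (max (γ 1/γ 0) 2) := by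
                exact mul_le_mul_of_nonneg_left h2 (hγ (k+1)).le
            _ = max (γ 1/γ 0) 2 * γ (k+1) := by ring
    exact fun k => key (k+1)
  set M := max (γ 1/γ 0) 2 with hM
  have hMpos : 0 < M := lt_of_lt_of_le two_pos (le_max_right _ _)
  have hU'φ : Tendsto (fun j => Ufun f g xh x γ (φ j + 1)) atTop (𝓝 0) := by
    unfold Ufun
    have hterm1 : Tendsto (fun j => 1/2 * ‖x (φ j + 1 + 1) - xh‖^2) atTop (𝓝 0) := by
      have hnorm : Tendsto (fun j => ‖x (φ j + 2) - xh‖) atTop (𝓝 0) := by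
        have h1 : ∀ j, ‖x (φ j + 2) - xh‖
            ≤ ‖x (φ j) - xh‖ + ‖x (φ j + 1) - x (φ j)‖ + ‖x (φ j + 2) - x (φ j + 1)‖ := by
          intro j
          have e : x (φ j + 2) - xh = (x (φ j) - xh) + (x (φ j + 1) - x (φ j))
              + (x (φ j + 2) - x (φ j + 1)) := by abel
          rw [e]
          exact le_trans (norm_add_le _ _) (by
            have := norm_add_le (x (φ j) - xh + (x (φ j + 1) - x (φ j))) (x (φ j + 2) - x (φ j + 1))
            have h2 := norm_add_le (x (φ j) - xh) (x (φ j + 1) - x (φ j))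
            linarith)
        have hn1 : Tendsto (fun j => ‖x (φ j) - xh‖) atTop (𝓝 0) := by
          have := (tendsto_iff_norm_sub_tendsto_zero).1 hxφ
          exact this
        have hn2 : Tendsto (fun j => ‖x (φ j + 1) - x (φ j)‖) atTop (𝓝 0) := by
          have := ht0'.comp hφ.tendsto_atTop
          exact this
        have hn3 : Tendsto (fun j => ‖x (φ j + 2) - x (φ j + 1)‖) atTop (𝓝 0) := by
          have h4 : Tendsto (fun k => ‖x (k + 2) - x (k + 1)‖) atTop (𝓝 0) := by
            rw [← tendsto_add_atTop_iff_nat 1] at ht0'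
            exact ht0'
          exact h4.comp hφ.tendsto_atTop
        have hsum : Tendsto (fun j => ‖x (φ j) - xh‖ + ‖x (φ j + 1) - x (φ j)‖
            + ‖x (φ j + 2) - x (φ j + 1)‖) atTop (𝓝 0) := by
          have := (hn1.add hn2).add hn3
          simpa using this
        exact squeeze_zero (fun j => norm_nonneg _) h1 hsum
      have hsq : Tendsto (fun j => ‖x (φ j + 2) - xh‖^2) atTop (𝓝 0) := by
        have := hnorm.mul hnorm
        simpa [pow_two] using this
      have := hsq.const_mul (1/2 : ℝ)
      simpa using this
    have hterm2 : Tendsto (fun j => 1/4 * ‖x (φ j + 1 + 1) - x (φ j + 1)‖^2) atTop (𝓝 0) := by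
      have hnorm : Tendsto (fun j => ‖x (φ j + 2) - x (φ j + 1)‖) atTop (𝓝 0) := by
        have h4 : Tendsto (fun k => ‖x (k + 2) - x (k + 1)‖) atTop (𝓝 0) := by
          rw [← tendsto_add_atTop_iff_nat 1] at ht0'
          exact ht0'
        exact h4.comp hφ.tendsto_atTop
      have hsq : Tendsto (fun j => ‖x (φ j + 2) - x (φ j + 1)‖^2) atTop (𝓝 0) := by
        have := hnorm.mul hnorm
        simpa [pow_two] using this
      have := hsq.const_mul (1/4 : ℝ)
      simpa using this
    have hterm3 : Tendsto (fun j => γ (φ j + 1 + 1) * (1 + γ (φ j + 1 + 1) / γ (φ j + 1))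
        * Pval f g xh (x (φ j + 1))) atTop (𝓝 0) := by
      have hbound : ∀ j, |γ (φ j + 2) * (1 + γ (φ j + 2) / γ (φ j + 1))
          * Pval f g xh (x (φ j + 1))|
          ≤ (1 + M) * (γ (φ j + 2) * Pval f g xs (x (φ j + 1))) := by
        intro j
        rw [hPval_eq]
        have hP := Pnn (φ j)
        have hγ1 := hγ (φ j + 2)
        have hγ2 := hγ (φ j + 1)
        have hρ := hrhobd (φ j)
        have hρ0 : 0 < γ (φ j + 2)/γ (φ j + 1) := div_pos hγ1 hγ2
        have habs : |γ (φ j + 2) * (1 + γ (φ j + 2) / γ (φ j + 1))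
            * Pval f g xs (x (φ j + 1))|
            = γ (φ j + 2) * (1 + γ (φ j + 2) / γ (φ j + 1)) * Pval f g xs (x (φ j + 1)) := by
          apply abs_of_nonneg
          have : (0:ℝ) ≤ 1 + γ (φ j + 2)/γ (φ j + 1) := by linarith
          positivity
        rw [habs]
        have h6 : γ (φ j + 2) * (1 + γ (φ j + 2) / γ (φ j + 1)) * Pval f g xs (x (φ j + 1))
            = (1 + γ (φ j + 2) / γ (φ j + 1)) * (γ (φ j + 2) * Pval f g xs (x (φ j + 1))) := by
          ring
        rw [h6]
        apply mul_le_mul_of_nonneg_right _ (mul_nonneg hγ1.le hP)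
        linarith
      have hgPφ : Tendsto (fun j => γ (φ j + 2) * Pval f g xs (x (φ j + 1))) atTop (𝓝 0) := by
        have h7 : Tendsto (fun k => γ (k + 2) * Pval f g xs (x (k+1))) atTop (𝓝 0) := by
          rw [← tendsto_add_atTop_iff_nat 1] at hgP0'
          exact hgP0'
        exact h7.comp hφ.tendsto_atTop
      have hup : Tendsto (fun j => (1 + M) * (γ (φ j + 2) * Pval f g xs (x (φ j + 1)))) atTop
          (𝓝 0) := by
        have := hgPφ.const_mul (1 + M)
        simpa using this
      exact squeeze_zero_norm hbound hup
    have := (hterm1.add hterm2).add hterm3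
    simpa using this
  -- conclude U' → 0
  have hU'bdd : BddBelow (Set.range (fun k => Ufun f g xh x γ (k+1))) := by
    refine ⟨0, ?_⟩
    rintro u ⟨k, rfl⟩
    dsimp only
    unfold Ufun
    have hP := Pnn k
    rw [hPval_eq]
    have h2 := coefnn k
    have h3 : (0:ℝ) ≤ 1/2 * ‖x (k+2) - xh‖^2 := by positivity
    have h4 : (0:ℝ) ≤ 1/4 * ‖x (k+2) - x (k+1)‖^2 := by positivity
    nlinarith [mul_nonneg h2 hP]
  have hU'conv : Tendsto (fun k => Ufun f g xh x γ (k+1)) atTop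
      (𝓝 (⨅ k, Ufun f g xh x γ (k+1))) := tendsto_atTop_ciInf Umono' hU'bdd
  have hiszero : (⨅ k, Ufun f g xh x γ (k+1)) = 0 := by
    have hsub : Tendsto (fun j => Ufun f g xh x γ (φ j + 1)) atTop
        (𝓝 (⨅ k, Ufun f g xh x γ (k+1))) := by
      have : (fun j => Ufun f g xh x γ (φ j + 1))
          = (fun k => Ufun f g xh x γ (k+1)) ∘ φ := rfl
      rw [this]
      exact hU'conv.comp hφ.tendsto_atTop
    exact tendsto_nhds_unique hsub hU'φ
  rw [hiszero] at hU'conv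
  -- convergence of x to xh
  have hxnorm : Tendsto (fun k => ‖x (k+2) - xh‖^2) atTop (𝓝 0) := by
    apply squeeze_zero (fun k => by positivity) (g := fun k => 2*Ufun f g xh x γ (k+1))
    · intro k
      have h1 : 1/2*‖x (k+2) - xh‖^2 ≤ Ufun f g xh x γ (k+1) := by
        unfold Ufun
        have hP := Pnn k
        rw [hPval_eq]
        have h2 := coefnn k
        have h4 : (0:ℝ) ≤ 1/4 * ‖x (k+2) - x (k+1)‖^2 := by positivity
        nlinarith [mul_nonneg h2 hP]
      linarith
    · have := hU'conv.const_mul (2:ℝ)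
      simpa using this
  have hxnorm' : Tendsto (fun k => ‖x (k+2) - xh‖) atTop (𝓝 0) := by
    have h3 : Tendsto (fun k => Real.sqrt (‖x (k+2) - xh‖^2)) atTop (𝓝 (Real.sqrt 0)) :=
      (Real.continuous_sqrt.tendsto 0).comp hxnorm
    rw [Real.sqrt_zero] at h3
    have h4 : (fun k => Real.sqrt (‖x (k+2) - xh‖^2)) = fun k => ‖x (k+2) - xh‖ := by
      funext k
      rw [Real.sqrt_sq (norm_nonneg _)]
    rwa [h4] at h3
  refine ⟨xh, hxh_min, ?_⟩
  have h5 : Tendsto (fun k => x (k+2)) atTop (𝓝 xh) := by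
    rw [tendsto_iff_norm_sub_tendsto_zero]
    exact hxnorm'
  rw [← tendsto_add_atTop_iff_nat 2]
  exact h5

-- Lipschitz bound on a compact set from local Lipschitz continuity
lemma locallyLipschitz_compact_bound {n : ℕ} (f' : En n → En n)
    (hlip : LocallyLipschitz f') {s : Set (En n)} (hs : IsCompact s) :
    ∃ K : ℝ, 0 < K ∧ ∀ a ∈ s, ∀ b ∈ s, ‖f' a - f' b‖ ≤ K * ‖a - b‖ := by
  rcases s.eq_empty_or_nonempty with rfl | hne
  · exact ⟨1, one_pos, by simp⟩
  -- local data
  have hloc : ∀ z : En n, ∃ ε : ℝ, 0 < ε ∧ ∃ K : NNReal,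
      LipschitzOnWith K f' (Metric.ball z ε) := by
    intro z
    obtain ⟨K, t, ht, hK⟩ := hlip z
    obtain ⟨ε, hε, hball⟩ := Metric.mem_nhds_iff.1 ht
    exact ⟨ε, hε, K, hK.mono hball⟩
  choose ε hεpos K hKf using hloc
  -- finite subcover with half-radius balls
  obtain ⟨T, hTs, hTcov⟩ := hs.elim_nhds_subcover (fun z => Metric.ball z (ε z / 2))
    (fun z _ => Metric.ball_mem_nhds z (by linarith [hεpos z]))
  have hTne : T.Nonempty := by
    by_contra hTe
    rw [Finset.not_nonempty_iff_eq_empty] at hTe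
    obtain ⟨p, hp⟩ := hne
    have := hTcov hp
    simp [hTe] at this
  -- minimal radius
  set εm := T.inf' hTne (fun z => ε z / 2) with hεm
  have hεmpos : 0 < εm := by
    rw [hεm]
    exact (Finset.lt_inf'_iff hTne).2 (fun z _ => by linarith [hεpos z])
  -- bound of f' on s
  obtain ⟨Mb, hMb⟩ := hs.exists_bound_of_continuousOn hlip.continuous.continuousOn
  have hMb0 : 0 ≤ Mb := le_trans (norm_nonneg _) (hMb _ hne.choose_spec)
  -- max Lipschitz constant
  set Km : NNReal := T.sup K with hKm
  refine ⟨(Km : ℝ) + 2*Mb/εm + 1, by positivity, ?_⟩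
  intro a ha b hb
  rcases lt_or_ge (dist a b) εm with hlt | hge
  · -- same ball
    obtain ⟨z, hzT, hzball⟩ := Set.mem_iUnion₂.1 (hTcov ha)
    have hbball : b ∈ Metric.ball z (ε z) := by
      rw [Metric.mem_ball] at hzball ⊢
      have h1 : dist b z ≤ dist b a + dist a z := dist_triangle _ _ _
      have h2 : εm ≤ ε z / 2 := Finset.inf'_le _ hzT
      rw [dist_comm b a] at h1
      linarith
    have haball : a ∈ Metric.ball z (ε z) := by
      rw [Metric.mem_ball] at hzball ⊢
      linarith [hεpos z]
    have hd := (lipschitzOnWith_iff_dist_le_mul.1 (hKf z)) a haball b hbball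
    have hKle : (K z : ℝ) ≤ (Km : ℝ) := by
      exact_mod_cast NNReal.coe_le_coe.2 (Finset.le_sup hzT)
    rw [dist_eq_norm, dist_eq_norm] at hd
    have h3 : (K z : ℝ) * ‖a - b‖ ≤ ((Km : ℝ) + 2*Mb/εm + 1) * ‖a - b‖ := by
      apply mul_le_mul_of_nonneg_right _ (norm_nonneg _)
      have : (0:ℝ) ≤ 2*Mb/εm := by positivity
      linarith
    linarith
  · -- far apart : use the bound
    have h1 : ‖f' a - f' b‖ ≤ 2*Mb := by
      have := norm_sub_le (f' a) (f' b)
      have ha' := hMb a ha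
      have hb' := hMb b hb
      linarith
    have h2 : 2*Mb ≤ (2*Mb/εm) * ‖a - b‖ := by
      rw [dist_eq_norm] at hge
      rw [div_mul_eq_mul_div, le_div_iff₀ hεmpos]
      have : 0 ≤ 2*Mb := by positivity
      nlinarith
    have h3 : (2*Mb/εm) * ‖a - b‖ ≤ ((Km : ℝ) + 2*Mb/εm + 1) * ‖a - b‖ := by
      apply mul_le_mul_of_nonneg_right _ (norm_nonneg _)
      have : (0:ℝ) ≤ (Km:ℝ) := Km.coe_nonneg
      linarith
    linarith

-- deltaEst upper bound from a Lipschitz estimate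
lemma deltaEst_le {n : ℕ} {f : En n → ℝ} {f' : En n → En n}
    (hconv : ConvexOn ℝ Set.univ f) (hgrad : ∀ z, HasGradientAt f (f' z) z)
    {γ K : ℝ} (hγ : 0 < γ) (hK : 0 < K) (a b : En n)
    (hL : ‖f' a - f' b‖ ≤ K * ‖a - b‖) :
    deltaEst γ f' a b ≤ γ^2 * K^2 := by
  have hInn := inner_grad_nonneg hconv hgrad a b
  unfold deltaEst lEst cEst
  rcases eq_or_lt_of_le hInn with h0 | hpos
  · rw [← h0]
    simp
    positivity
  · rcases eq_or_ne (‖a - b‖^2) 0 with ht0 | htne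
    · have : ⟪f' a - f' b, a - b⟫ = 0 := by
        have hab : a - b = 0 := by
          have := pow_eq_zero_iff (n := 2) (by norm_num) |>.1 ht0
          exact norm_eq_zero.1 this
        rw [hab, inner_zero_right]
      rw [this] at hpos
      exact absurd hpos (lt_irrefl _)
    · have htpos : 0 < ‖a - b‖^2 := lt_of_le_of_ne (by positivity) (Ne.symm htne)
      have hIne : ⟪f' a - f' b, a - b⟫ ≠ 0 := ne_of_gt hpos
      have key : γ * (⟪f' a - f' b, a - b⟫ / ‖a - b‖ ^ 2)
          * (γ * (‖f' a - f' b‖ ^ 2 / ⟪f' a - f' b, a - b⟫) - 1)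
          ≤ γ^2 * (‖f' a - f' b‖^2 / ‖a - b‖^2) := by
        set I := ⟪f' a - f' b, a - b⟫
        set N := ‖f' a - f' b‖^2
        set T := ‖a - b‖^2
        have e1 : γ * (I / T) * (γ * (N / I) - 1) = γ^2 * (N / T) - γ * (I / T) := by
          field_simp
        rw [e1]
        have h2 : 0 ≤ γ * (I / T) := by positivity
        linarith
      refine le_trans key ?_
      have h3 : ‖f' a - f' b‖^2 ≤ K^2 * ‖a - b‖^2 := by
        have := mul_self_le_mul_self (norm_nonneg (f' a - f' b)) hL
        calc ‖f' a - f' b‖^2 = ‖f' a - f' b‖*‖f' a - f' b‖ := by ring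
          _ ≤ (K*‖a-b‖)*(K*‖a-b‖) := this
          _ = K^2*‖a-b‖^2 := by ring
      have h4 : ‖f' a - f' b‖^2/‖a - b‖^2 ≤ K^2 := by
        rw [div_le_iff₀ htpos]
        linarith
      have h5 : γ^2 * (‖f' a - f' b‖^2/‖a - b‖^2) ≤ γ^2 * K^2 :=
        mul_le_mul_of_nonneg_left h4 (by positivity)
      exact h5

-- adaStep lower bound
lemma adaStep_lower {ρ δ γc K : ℝ} (hρ : 0 < ρ) (hγc : 0 < γc) (hK : 0 < K)
    (hδ : δ ≤ γc^2 * K^2) : min γc (1/(2*K)) ≤ γc * adaStep ρ δ := by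
  unfold adaStep
  split_ifs with h
  · have h1 : (1:ℝ) ≤ Real.sqrt (1 + ρ) := by
      rw [Real.one_le_sqrt]
      linarith
    calc min γc (1/(2*K)) ≤ γc := min_le_left _ _
      _ = γc * 1 := by ring
      _ ≤ γc * Real.sqrt (1+ρ) := by
          exact mul_le_mul_of_nonneg_left h1 hγc.le
  · push_neg at h
    have h1 : (1:ℝ) ≤ Real.sqrt (1 + ρ) := by
      rw [Real.one_le_sqrt]
      linarith
    have hsδ : Real.sqrt δ ≤ γc * K := by
      have := Real.sqrt_le_sqrt hδ
      calc Real.sqrt δ ≤ Real.sqrt (γc^2*K^2) := this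
        _ = Real.sqrt ((γc*K)^2) := by ring_nf
        _ = γc*K := Real.sqrt_sq (by positivity)
    have hsδpos : 0 < Real.sqrt δ := Real.sqrt_pos.2 h
    have h2 : 1/(2*(γc*K)) ≤ 1/(2*Real.sqrt δ) :=
      one_div_le_one_div_of_le (by positivity) (by linarith)
    have h3 : γc * (1/(2*(γc*K))) = 1/(2*K) := by
      field_simp
    rw [mul_min_of_nonneg _ _ hγc.le]
    apply le_min
    · calc min γc (1/(2*K)) ≤ γc := min_le_left _ _
        _ = γc*1 := by ring
        _ ≤ γc * Real.sqrt (1+ρ) := mul_le_mul_of_nonneg_left h1 hγc.le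
    · calc min γc (1/(2*K)) ≤ 1/(2*K) := min_le_right _ _
        _ = γc * (1/(2*(γc*K))) := h3.symm
        _ ≤ γc * (1/(2*Real.sqrt δ)) := mul_le_mul_of_nonneg_left h2 hγc.le

lemma adaStep_pos {ρ δ : ℝ} (hρ : 0 < ρ) : 0 < adaStep ρ δ := by
  unfold adaStep
  split_ifs with h
  · exact Real.sqrt_pos.2 (by linarith)
  · push_neg at h
    exact lt_min (Real.sqrt_pos.2 (by linarith))
      (by positivity)

set_option maxHeartbeats 1000000 in
lemma iterates_bounded {n : ℕ} {f : En n → ℝ} {f' : En n → En n} {g : En n → EReal}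
    (hconv : ConvexOn ℝ Set.univ f) (hgrad : ∀ z, HasGradientAt f (f' z) z)
    (hg : ProperLscConvex g) {xs : En n}
    (hxs : ∀ w, (f xs : EReal) + g xs ≤ (f w : EReal) + g w)
    (x : ℕ → En n) (γ : ℕ → ℝ) (hγ : ∀ k, 0 < γ k)
    (hprox : ∀ k, IsProx (γ (k+1)) g (x k - γ (k+1) • f' (x k)) (x (k+1)))
    (hrule : ∀ k, γ (k+2)
      ≤ γ (k+1) * adaStep (γ (k+1)/γ k) (deltaEst (γ (k+1)) f' (x k) (x (k+1)))) :
    ∃ R : ℝ, ∀ k, x k ∈ Metric.closedBall xs R := by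
  have hfin : ∀ k, g (x (k+1)) ≠ ⊤ := fun k => prox_ne_top hg (hprox k)
  have Pnn : ∀ k, 0 ≤ Pval f g xs (x (k+1)) := fun k => Pval_nonneg hg hxs (hfin k)
  have coefnn : ∀ k, 0 ≤ γ (k+2) * (1 + γ (k+2) / γ (k+1)) := by
    intro k
    have h1 := hγ (k+2); have h2 := hγ (k+1)
    positivity
  have step : ∀ k : ℕ, Ufun f g xs x γ (k+2) ≤ Ufun f g xs x γ (k+1) := by
    intro k
    have cond1 := rule_cond1 (hγ (k+1)) (hγ (k+2)) (hγ (k+3)) _ (hrule (k+1))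
    have cond2 := rule_cond2 (hγ (k+2)) (hγ (k+3)) _ (hrule (k+1))
    have h := onestep hconv hgrad hg hxs (hγ (k+1)) (hγ (k+2)) (hγ (k+3)) (hfin k)
      (hprox (k+1)) (hprox (k+2)) cond1 cond2
    have h1 := h.1
    have h2 : (0:ℝ) ≤ 1/4*‖x (k+3) - x (k+2) - (2:ℝ) • ((γ (k+3)/γ (k+2)) • (x (k+2) - x (k+1))
      + γ (k+3) • (f' (x (k+1)) - f' (x (k+2))))‖^2 := by positivity
    unfold Ufun
    linarith [h1, h2]
  have Umono : Antitone (fun k => Ufun f g xs x γ (k+1)) := by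
    apply antitone_nat_of_succ_le
    intro k
    exact step k
  have Ubd : ∀ k, Ufun f g xs x γ (k+1) ≤ Ufun f g xs x γ 1 := by
    intro k
    have := Umono (Nat.zero_le k)
    simpa using this
  have hUb : ∀ m, 1/2*‖x (m+2) - xs‖^2 ≤ Ufun f g xs x γ 1 := by
    intro m
    have h1 : 1/2*‖x (m+2) - xs‖^2 ≤ Ufun f g xs x γ (m+1) := by
      unfold Ufun
      have h2 := Pnn m
      have h3 := coefnn m
      have h4 : (0:ℝ) ≤ 1/4 * ‖x (m+2) - x (m+1)‖^2 := by positivity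
      nlinarith [mul_nonneg h3 h2]
    exact le_trans h1 (Ubd m)
  refine ⟨max (Real.sqrt (2*Ufun f g xs x γ 1)) (max ‖x 0 - xs‖ ‖x 1 - xs‖), ?_⟩
  intro k
  rw [Metric.mem_closedBall, dist_eq_norm]
  match k with
  | 0 => exact le_trans (le_max_left _ _) (le_max_right _ _)
  | 1 => exact le_trans (le_max_right _ _) (le_max_right _ _)
  | (m+2) =>
    refine le_trans ?_ (le_max_left _ _)
    rw [show ‖x (m+2) - xs‖ = Real.sqrt (‖x (m+2) - xs‖^2) by
      rw [Real.sqrt_sq (norm_nonneg _)]]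
    apply Real.sqrt_le_sqrt
    have := hUb m
    linarith

/-- convergence of adaPGM to a minimizer of `φ = f + g`, and, more
generally, of proximal gradient iterations whose stepsizes satisfy the adaPGM
rule with "≤" and are bounded away from zero.
Indexing is shifted by one: Lean `x (k+1)`, `γ (k+1)` are the paper `x^k`, `γ_k`. -/
theorem adaPGM_convergence {n : ℕ}
    (f : En n → ℝ) (f' : En n → En n) (g : En n → EReal)
    (hconv : ConvexOn ℝ Set.univ f)
    (hgrad : ∀ z, HasGradientAt f (f' z) z)
    (hlip : LocallyLipschitz f')
    (hg : ProperLscConvex g)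
    (hargmin : ∃ z, ∀ w, (f z : EReal) + g z ≤ (f w : EReal) + g w) :
    (∀ (x : ℕ → En n) (γ : ℕ → ℝ), 0 < γ 0 → γ 0 ≤ γ 1 →
        (∀ k, IsProx (γ (k+1)) g (x k - γ (k+1) • f' (x k)) (x (k+1))) →
        (∀ k, γ (k+2)
          = γ (k+1) * adaStep (γ (k+1) / γ k) (deltaEst (γ (k+1)) f' (x k) (x (k+1)))) →
        ∃ xh : En n, (∀ w, (f xh : EReal) + g xh ≤ (f w : EReal) + g w) ∧
          Tendsto x atTop (nhds xh))
    ∧ (∀ (x : ℕ → En n) (γ : ℕ → ℝ), (∀ k, 0 < γ k) →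
        (∀ k, IsProx (γ (k+1)) g (x k - γ (k+1) • f' (x k)) (x (k+1))) →
        (∀ k, γ (k+2)
          ≤ γ (k+1) * adaStep (γ (k+1) / γ k) (deltaEst (γ (k+1)) f' (x k) (x (k+1)))) →
        (∃ c : ℝ, 0 < c ∧ ∀ k, c ≤ γ k) →
        ∃ xh : En n, (∀ w, (f xh : EReal) + g xh ≤ (f w : EReal) + g w) ∧
          Tendsto x atTop (nhds xh)) := by
  constructor
  · intro x γ hγ0 hγ01 hprox hruleEq
    have hγ1 : 0 < γ 1 := lt_of_lt_of_le hγ0 hγ01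
    -- positivity of all stepsizes
    have hγpair : ∀ k, 0 < γ k ∧ 0 < γ (k+1) := by
      intro k
      induction k with
      | zero => exact ⟨hγ0, hγ1⟩
      | succ k ih =>
          refine ⟨ih.2, ?_⟩
          rw [hruleEq k]
          exact mul_pos ih.2 (adaStep_pos (div_pos ih.2 ih.1))
    have hγ : ∀ k, 0 < γ k := fun k => (hγpair k).1
    have hrule : ∀ k, γ (k+2)
        ≤ γ (k+1) * adaStep (γ (k+1)/γ k) (deltaEst (γ (k+1)) f' (x k) (x (k+1))) :=
      fun k => le_of_eq (hruleEq k)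
    -- bounded iterates, Lipschitz constant on the ball
    obtain ⟨xs, hxs⟩ := hargmin
    obtain ⟨R, hball⟩ := iterates_bounded hconv hgrad hg hxs x γ hγ hprox hrule
    obtain ⟨K, hK, hKlip⟩ := locallyLipschitz_compact_bound f' hlip
      (isCompact_closedBall xs R)
    -- lower bound on stepsizes
    have hlow : ∀ k, min (γ 1) (1/(2*K)) ≤ γ (k+1) := by
      intro k
      induction k with
      | zero => exact min_le_left _ _
      | succ k ih =>
          have hδ : deltaEst (γ (k+1)) f' (x k) (x (k+1)) ≤ (γ (k+1))^2 * K^2 :=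
            deltaEst_le hconv hgrad (hγ (k+1)) hK _ _
              (hKlip _ (hball k) _ (hball (k+1)))
          have h1 : min (γ (k+1)) (1/(2*K)) ≤ γ (k+2) := by
            rw [hruleEq k]
            exact adaStep_lower (div_pos (hγ (k+1)) (hγ k)) (hγ (k+1)) hK hδ
          have h2 : min (γ 1) (1/(2*K)) ≤ min (γ (k+1)) (1/(2*K)) :=
            le_min ih (min_le_right _ _)
          exact le_trans h2 h1
    have hcpos : 0 < min (min (γ 0) (γ 1)) (1/(2*K)) := by
      apply lt_min (lt_min hγ0 hγ1)
      positivity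
    have hclow : ∀ k, min (min (γ 0) (γ 1)) (1/(2*K)) ≤ γ k := by
      intro k
      match k with
      | 0 => exact le_trans (min_le_left _ _) (min_le_left _ _)
      | (m+1) =>
        refine le_trans ?_ (hlow m)
        apply le_min
        · exact le_trans (min_le_left _ _) (min_le_right _ _)
        · exact min_le_right _ _
    exact core hconv hgrad hg ⟨xs, hxs⟩ x γ hγ hprox hrule
      ⟨_, hcpos, hclow⟩
  · intro x γ hγ hprox hrule hlb
    exact core hconv hgrad hg hargmin x γ hγ hprox hrule hlb
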